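/- Let R : ℝ^N → [0,∞) be differentiable with locally Lipschitz gradient. Let (θ_n) be the sequence generated by the LCM backtracking algorithm applied to gradient descent, i.e. θ_{n+1} = θ_n − η_n ∇R(θ_n) where η_n = f2·η_{n−1}·f1^{−p_n} (with convention η_{−1} = η_init/f2) and p_n is the least k ∈ ℕ such that R(θ_n − η ∇R(θ_n)) − R(θ_n) ≤ −λ η ‖∇R(θ_n)‖² holds for η = f2·η_{n−1}·f1^{−k}. If the sequence (θ_n) is bounded, then every accumulation point θ* of (θ_n) (i.e. every limit of a convergent subsequence) satisfies ∇R(θ*) = 0. -/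

import Mathlib

open scoped RealInnerProductSpace
open Filter

open Set in
lemma my_lip_compact {E F : Type*} [NormedAddCommGroup E] [NormedAddCommGroup F]
    {f : E → F} (hf : LocallyLipschitz f) {K : Set E} (hK : IsCompact K) :
    ∃ L : ℝ, 1 ≤ L ∧ ∀ x ∈ K, ∀ y ∈ K, ‖f x - f y‖ ≤ L * ‖x - y‖ := by
  rcases K.eq_empty_or_nonempty with hKe | hne
  · exact ⟨1, le_refl _, by simp [hKe]⟩
  have hfc := hf.continuous
  choose Kc t ht hlip using hf
  choose r hr hball using fun z => Metric.mem_nhds_iff.mp (ht z)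
  obtain ⟨s, hsK, hcov⟩ := hK.elim_nhds_subcover (fun z => Metric.ball z (r z / 2))
    (fun z _ => Metric.ball_mem_nhds z (half_pos (hr z)))
  have hs : s.Nonempty := by
    obtain ⟨x0, hx0⟩ := hne
    have := hcov hx0
    simp only [Set.mem_iUnion] at this
    obtain ⟨z, hz, -⟩ := this
    exact ⟨z, hz⟩
  set r0 : ℝ := s.inf' hs (fun z => r z / 2) with hr0def
  have hr0pos : 0 < r0 := by
    rw [hr0def, Finset.lt_inf'_iff]
    intro z _
    have := hr z
    positivity
  obtain ⟨M0, hM0⟩ := hK.exists_bound_of_continuousOn hfc.continuousOn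
  set M : ℝ := max M0 0 with hMdef
  have hM : ∀ x ∈ K, ‖f x‖ ≤ M := fun x hx => (hM0 x hx).trans (le_max_left _ _)
  set Km : ℝ := s.sup' hs (fun z => (Kc z : ℝ)) with hKmdef
  refine ⟨max 1 (max Km (2 * M / r0)), le_max_left _ _, fun x hx y hy => ?_⟩
  by_cases hd : dist x y < r0
  · have := hcov hx
    simp only [Set.mem_iUnion] at this
    obtain ⟨z, hzs, hxz⟩ := this
    have hxz' : x ∈ Metric.ball z (r z) := by
      refine Metric.mem_ball.mpr ?_
      have := Metric.mem_ball.mp hxz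
      have hrz := hr z
      linarith
    have hyz : y ∈ Metric.ball z (r z) := by
      refine Metric.mem_ball.mpr ?_
      have h1 : dist y z ≤ dist y x + dist x z := dist_triangle y x z
      have h2 : dist x z < r z / 2 := Metric.mem_ball.mp hxz
      have h3 : r0 ≤ r z / 2 := Finset.inf'_le _ hzs
      rw [dist_comm y x] at h1
      linarith
    have hlz := (hlip z).dist_le_mul x (hball z hxz') y (hball z hyz)
    rw [dist_eq_norm, dist_eq_norm] at hlz
    refine hlz.trans ?_
    have h4 : (Kc z : ℝ) ≤ max 1 (max Km (2 * M / r0)) :=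
      le_trans (le_trans (Finset.le_sup' (fun z => (Kc z : ℝ)) hzs) (le_max_left _ _))
        (le_max_right _ _)
    exact mul_le_mul_of_nonneg_right h4 (norm_nonneg _)
  · push_neg at hd
    have h1 : ‖f x - f y‖ ≤ 2 * M := by
      calc ‖f x - f y‖ ≤ ‖f x‖ + ‖f y‖ := norm_sub_le _ _
        _ ≤ 2 * M := by have := hM x hx; have := hM y hy; linarith
    have hM0' : 0 ≤ M := le_max_right _ _
    calc ‖f x - f y‖ ≤ 2 * M := h1
      _ = (2 * M / r0) * r0 := by field_simp
      _ ≤ (2 * M / r0) * ‖x - y‖ := by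
          refine mul_le_mul_of_nonneg_left ?_ (by positivity)
          rw [← dist_eq_norm]; exact hd
      _ ≤ max 1 (max Km (2 * M / r0)) * ‖x - y‖ :=
          mul_le_mul_of_nonneg_right (le_trans (le_max_right _ _) (le_max_right _ _))
            (norm_nonneg _)

lemma my_descent {N : ℕ} (R : EuclideanSpace ℝ (Fin N) → ℝ) (hRdiff : Differentiable ℝ R)
    {L : ℝ} {s : Set (EuclideanSpace ℝ (Fin N))} (hs : Convex ℝ s)
    (hL : ∀ x ∈ s, ∀ y ∈ s, ‖gradient R x - gradient R y‖ ≤ L * ‖x - y‖)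
    {x y : EuclideanSpace ℝ (Fin N)} (hx : x ∈ s) (hy : y ∈ s) (hL0 : 0 ≤ L) :
    R y - R x ≤ ⟪gradient R x, y - x⟫ + L * ‖y - x‖ ^ 2 := by
  have hfg : ∀ z, fderiv ℝ R z
      = InnerProductSpace.toDual ℝ (EuclideanSpace ℝ (Fin N)) (gradient R z) := fun z =>
    ((InnerProductSpace.toDual ℝ _).apply_symm_apply _).symm
  have hseg : segment ℝ x y ⊆ s := hs.segment_subset hx hy
  have key : ‖R y - R x - (fderiv ℝ R x) (y - x)‖ ≤ (L * ‖y - x‖) * ‖y - x‖ := by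
    refine (convex_segment x y).norm_image_sub_le_of_norm_hasFDerivWithin_le'
      (f' := fderiv ℝ R) (φ := fderiv ℝ R x)
      (fun z _ => (hRdiff z).hasFDerivAt.hasFDerivWithinAt)
      ?_ (left_mem_segment ℝ x y) (right_mem_segment ℝ x y)
    intro z hz
    have h1 : ‖fderiv ℝ R z - fderiv ℝ R x‖ = ‖gradient R z - gradient R x‖ := by
      rw [hfg, hfg, ← map_sub]
      exact (InnerProductSpace.toDual ℝ _).norm_map _
    rw [h1]
    have h2 : ‖z - x‖ ≤ ‖y - x‖ := by
      obtain ⟨a, b, ha, hb, hab, rfl⟩ := hz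
      have ha' : a = 1 - b := by linarith
      subst ha'
      have h3 : (1 - b) • x + b • y - x = b • (y - x) := by module
      rw [h3, norm_smul]
      have hb1 : ‖b‖ ≤ 1 := by rw [Real.norm_eq_abs, abs_of_nonneg hb]; linarith
      calc ‖b‖ * ‖y - x‖ ≤ 1 * ‖y - x‖ := mul_le_mul_of_nonneg_right hb1 (norm_nonneg _)
        _ = ‖y - x‖ := one_mul _
    calc ‖gradient R z - gradient R x‖ ≤ L * ‖z - x‖ := hL z (hseg hz) x hx
      _ ≤ L * ‖y - x‖ := mul_le_mul_of_nonneg_left h2 hL0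
  have h4 : (fderiv ℝ R x) (y - x) = ⟪gradient R x, y - x⟫ := by
    rw [hfg, InnerProductSpace.toDual_apply_apply]
  have h5 : R y - R x - (fderiv ℝ R x) (y - x) ≤ (L * ‖y - x‖) * ‖y - x‖ :=
    (le_abs_self _).trans (by rwa [Real.norm_eq_abs] at key)
  rw [h4] at h5
  nlinarith [sq_nonneg ‖y - x‖]


/-- **GD limit set (Proposition: LCM backtracking gradient descent).**
If `R : ℝ^N → [0,∞)` is differentiable with locally Lipschitz gradient and `(θ_n)` is the
bounded sequence generated by the LCM backtracking algorithm applied to gradient descent,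
then every accumulation point of `(θ_n)` is a critical point of `R`. -/
theorem lcm_gd_accumulation_points_are_critical
    {N : ℕ} (R : EuclideanSpace ℝ (Fin N) → ℝ)
    (hR0 : ∀ θ, 0 ≤ R θ)
    (hRdiff : Differentiable ℝ R)
    (hRlip : LocallyLipschitz (gradient R))
    (lam ηinit f1 f2 : ℝ)
    (hlam : lam ∈ Set.Ioo (0 : ℝ) 1) (hηinit : 0 < ηinit) (hf1 : 1 < f1) (hf2 : 1 < f2)
    (θ : ℕ → EuclideanSpace ℝ (Fin N)) (η : ℕ → ℝ)
    (hstep : ∀ n, θ (n + 1) = θ n - η n • gradient R (θ n))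
    -- LCM backtracking rule: `η n = f2 · η (n-1) · f1^(-p)` where `p` is the least `k`
    -- satisfying the Armijo condition (with the convention `η_{-1} = ηinit / f2`).
    (hbt : ∀ n, ∃ p : ℕ,
      η n = (if n = 0 then ηinit else f2 * η (n - 1)) / f1 ^ p ∧
      (R (θ n - η n • gradient R (θ n)) - R (θ n) ≤ -lam * η n * ‖gradient R (θ n)‖ ^ 2) ∧
      (∀ k < p, ¬ (R (θ n - ((if n = 0 then ηinit else f2 * η (n - 1)) / f1 ^ k) • gradient R (θ n))
          - R (θ n) ≤
          -lam * ((if n = 0 then ηinit else f2 * η (n - 1)) / f1 ^ k) * ‖gradient R (θ n)‖ ^ 2)))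
    (hbdd : Bornology.IsBounded (Set.range θ))
    (θstar : EuclideanSpace ℝ (Fin N))
    (hacc : ∃ φ : ℕ → ℕ, StrictMono φ ∧ Tendsto (θ ∘ φ) atTop (nhds θstar)) :
    gradient R θstar = 0 := by
  obtain ⟨hlam0, hlam1⟩ := hlam
  have hf1' : (0:ℝ) < f1 := lt_trans one_pos hf1
  set g : EuclideanSpace ℝ (Fin N) → EuclideanSpace ℝ (Fin N) := gradient R with hg
  have hgc : Continuous g := hRlip.continuous
  -- positivity of step sizes
  have hηpos : ∀ n, 0 < η n := by
    intro n
    induction n using Nat.strong_induction_on with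
    | _ n ih =>
      obtain ⟨p, heq, -, -⟩ := hbt n
      rcases Nat.eq_zero_or_pos n with rfl | hn
      · simp only [if_pos rfl] at heq
        rw [heq]; positivity
      · rw [if_neg hn.ne'] at heq
        have := ih (n - 1) (Nat.sub_lt hn one_pos)
        rw [heq]; positivity
  -- Armijo inequality at each step
  have hArm : ∀ n, R (θ (n + 1)) - R (θ n) ≤ -lam * η n * ‖g (θ n)‖ ^ 2 := by
    intro n
    obtain ⟨p, -, hA, -⟩ := hbt n
    rw [hstep n]; exact hA
  -- R ∘ θ is antitone
  have hmono : ∀ n, R (θ (n + 1)) ≤ R (θ n) := by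
    intro n
    have h1 := hArm n
    nlinarith [hηpos n, sq_nonneg ‖g (θ n)‖, mul_pos hlam0 (hηpos n),
      mul_nonneg (mul_pos hlam0 (hηpos n)).le (sq_nonneg ‖g (θ n)‖)]
  have hanti : Antitone (fun n => R (θ n)) := antitone_nat_of_succ_le hmono
  have hbdd_below : BddBelow (Set.range (fun n => R (θ n))) :=
    ⟨0, by rintro x ⟨n, rfl⟩; exact hR0 _⟩
  have hconv : Tendsto (fun n => R (θ n)) atTop (nhds (⨅ n, R (θ n))) :=
    tendsto_atTop_ciInf hanti hbdd_below
  have hconv' : Tendsto (fun n => R (θ (n + 1))) atTop (nhds (⨅ n, R (θ n))) :=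
    hconv.comp (tendsto_add_atTop_nat 1)
  have hdiff0 : Tendsto (fun n => R (θ n) - R (θ (n + 1))) atTop (nhds 0) := by
    have := hconv.sub hconv'
    simpa using this
  -- η n * ‖g (θ n)‖² → 0
  have hto0 : Tendsto (fun n => η n * ‖g (θ n)‖ ^ 2) atTop (nhds 0) := by
    have hb : Tendsto (fun n => (1 / lam) * (R (θ n) - R (θ (n + 1)))) atTop (nhds 0) := by
      have := hdiff0.const_mul (1 / lam)
      simpa using this
    refine squeeze_zero (fun n => mul_nonneg (hηpos n).le (sq_nonneg _)) (fun n => ?_) hb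
    have h1 := hArm n
    have hlaminv : 0 < 1 / lam := by positivity
    have : lam * (η n * ‖g (θ n)‖ ^ 2) ≤ R (θ n) - R (θ (n + 1)) := by nlinarith
    calc η n * ‖g (θ n)‖ ^ 2 = (1 / lam) * (lam * (η n * ‖g (θ n)‖ ^ 2)) := by
          field_simp
      _ ≤ (1 / lam) * (R (θ n) - R (θ (n + 1))) := by
          exact mul_le_mul_of_nonneg_left this hlaminv.le
      _ ≤ (1 / lam) * (R (θ n) - R (θ (n + 1))) := le_refl _
    -- compact set containing everything
  obtain ⟨ρ0, hρ0⟩ := hbdd.subset_closedBall 0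
  set ρ : ℝ := max ρ0 0 with hρdef
  have hρθ : ∀ n, θ n ∈ Metric.closedBall (0 : EuclideanSpace ℝ (Fin N)) ρ := by
    intro n
    have := hρ0 ⟨n, rfl⟩
    exact Metric.closedBall_subset_closedBall (le_max_left _ _) this
  set K2 : Set (EuclideanSpace ℝ (Fin N)) := Metric.closedBall 0 (ρ + 1) with hK2def
  have hK2c : IsCompact K2 := isCompact_closedBall _ _
  have hK2conv : Convex ℝ K2 := convex_closedBall _ _
  have hθK2 : ∀ n, θ n ∈ K2 := by
    intro n
    exact Metric.closedBall_subset_closedBall (by linarith) (hρθ n)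
  -- Lipschitz constant on K2
  obtain ⟨L, hL1, hLip⟩ := my_lip_compact hRlip hK2c
  have hL0 : (0:ℝ) < L := lt_of_lt_of_le one_pos hL1
  -- gradient bound on K2
  obtain ⟨G0, hG0⟩ := hK2c.exists_bound_of_continuousOn hgc.continuousOn
  set G : ℝ := max G0 1 with hGdef
  have hG1 : (1:ℝ) ≤ G := le_max_right _ _
  have hG0' : (0:ℝ) < G := lt_of_lt_of_le one_pos hG1
  have hGb : ∀ x ∈ K2, ‖g x‖ ≤ G := fun x hx => (hG0 x hx).trans (le_max_left _ _)
  -- key lemma: failure of Armijo forces a lower bound on the trial step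
  set c0 : ℝ := min ((1 - lam) / L) (1 / G) with hc0def
  have hc0pos : 0 < c0 := by
    apply lt_min
    · apply div_pos (by linarith) hL0
    · exact div_pos one_pos hG0'
  have hkey : ∀ n (η' : ℝ), 0 < η' →
      ¬ (R (θ n - η' • g (θ n)) - R (θ n) ≤ -lam * η' * ‖g (θ n)‖ ^ 2) → c0 < η' := by
    intro n η' hη' hfail
    by_contra hcon
    push_neg at hcon
    have hc1 : η' ≤ (1 - lam) / L := le_trans hcon (min_le_left _ _)
    have hc2 : η' ≤ 1 / G := le_trans hcon (min_le_right _ _)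
    apply hfail
    have hgn : ‖g (θ n)‖ ≤ G := hGb _ (hθK2 n)
    have hηg : η' * ‖g (θ n)‖ ≤ 1 := by
      calc η' * ‖g (θ n)‖ ≤ (1 / G) * G := by
            apply mul_le_mul hc2 hgn (norm_nonneg _) (by positivity)
        _ = 1 := by field_simp
    have hyK2 : θ n - η' • g (θ n) ∈ K2 := by
      rw [hK2def, Metric.mem_closedBall, dist_zero_right]
      calc ‖θ n - η' • g (θ n)‖ ≤ ‖θ n‖ + ‖η' • g (θ n)‖ := norm_sub_le _ _
        _ ≤ ρ + 1 := by
            have h1 : ‖θ n‖ ≤ ρ := by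
              have := hρθ n
              rwa [Metric.mem_closedBall, dist_zero_right] at this
            have h2 : ‖η' • g (θ n)‖ = η' * ‖g (θ n)‖ := by
              rw [norm_smul, Real.norm_eq_abs, abs_of_pos hη']
            linarith [hηg, h2.le, h2.ge]
    have hdesc := my_descent R hRdiff hK2conv hLip (hθK2 n) hyK2 hL0.le
    rw [← hg] at hdesc
    have hinner : ⟪g (θ n), θ n - η' • g (θ n) - θ n⟫ = -η' * ‖g (θ n)‖ ^ 2 := by
      have : θ n - η' • g (θ n) - θ n = (-η') • g (θ n) := by module
      rw [this, real_inner_smul_right, real_inner_self_eq_norm_sq]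
    have hnorm : ‖θ n - η' • g (θ n) - θ n‖ ^ 2 = η' ^ 2 * ‖g (θ n)‖ ^ 2 := by
      have : θ n - η' • g (θ n) - θ n = (-η') • g (θ n) := by module
      rw [this, norm_smul, Real.norm_eq_abs, abs_neg, abs_of_pos hη', mul_pow]
    rw [hinner, hnorm] at hdesc
    -- from η' ≤ (1-lam)/L : L * η' ≤ 1 - lam
    have hLη : L * η' ≤ 1 - lam := by
      rw [le_div_iff₀ hL0] at hc1
      linarith
    nlinarith [sq_nonneg ‖g (θ n)‖, mul_nonneg (sq_nonneg ‖g (θ n)‖) hη'.le]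
  -- uniform lower bound on step sizes
  set m : ℝ := min ηinit (c0 / f1) with hmdef
  have hmpos : 0 < m := lt_min hηinit (by positivity)
  have hηlb : ∀ n, m ≤ η n := by
    intro n
    induction n with
    | zero =>
      obtain ⟨p, heq, -, hfail⟩ := hbt 0
      simp only [reduceIte] at heq hfail
      rcases Nat.eq_zero_or_pos p with rfl | hp
      · simp only [pow_zero, div_one] at heq
        rw [heq]; exact min_le_left _ _
      · obtain ⟨q, rfl⟩ := Nat.exists_eq_succ_of_ne_zero hp.ne'
        have hf := hfail q (Nat.lt_succ_self q)
        have hstep' : ηinit / f1 ^ q = f1 * η 0 := by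
          rw [heq]; field_simp; rw [Nat.succ_eq_add_one]; ring
        have hpos' : 0 < ηinit / f1 ^ q := by positivity
        have := hkey 0 _ hpos' hf
        rw [hstep'] at this
        have : c0 / f1 < η 0 := by
          rw [div_lt_iff₀ hf1']
          linarith [this]
        exact le_trans (min_le_right _ _) this.le
    | succ n ih =>
      obtain ⟨p, heq, -, hfail⟩ := hbt (n + 1)
      simp only [Nat.succ_ne_zero, ite_false, Nat.add_sub_cancel] at heq hfail
      rcases Nat.eq_zero_or_pos p with rfl | hp
      · simp only [pow_zero, div_one] at heq
        rw [heq]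
        calc m ≤ η n := ih
          _ = 1 * η n := (one_mul _).symm
          _ ≤ f2 * η n := mul_le_mul_of_nonneg_right hf2.le (hηpos n).le
      · obtain ⟨q, rfl⟩ := Nat.exists_eq_succ_of_ne_zero hp.ne'
        have hf := hfail q (Nat.lt_succ_self q)
        have hstep' : f2 * η n / f1 ^ q = f1 * η (n + 1) := by
          rw [heq]; field_simp; rw [Nat.succ_eq_add_one]; ring
        have hpos' : 0 < f2 * η n / f1 ^ q := by
          have := hηpos n
          positivity
        have := hkey (n + 1) _ hpos' hf
        rw [hstep'] at this
        have : c0 / f1 < η (n + 1) := by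
          rw [div_lt_iff₀ hf1']
          linarith [this]
        exact le_trans (min_le_right _ _) this.le
  -- hence ‖g (θ n)‖² → 0
  have hsq0 : Tendsto (fun n => ‖g (θ n)‖ ^ 2) atTop (nhds 0) := by
    have hb : Tendsto (fun n => (1 / m) * (η n * ‖g (θ n)‖ ^ 2)) atTop (nhds 0) := by
      have := hto0.const_mul (1 / m)
      simpa using this
    refine squeeze_zero (fun n => sq_nonneg _) (fun n => ?_) hb
    have h1 : m * ‖g (θ n)‖ ^ 2 ≤ η n * ‖g (θ n)‖ ^ 2 :=
      mul_le_mul_of_nonneg_right (hηlb n) (sq_nonneg _)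
    calc ‖g (θ n)‖ ^ 2 = (1 / m) * (m * ‖g (θ n)‖ ^ 2) := by field_simp
      _ ≤ (1 / m) * (η n * ‖g (θ n)‖ ^ 2) :=
          mul_le_mul_of_nonneg_left h1 (by positivity)
  have hn0 : Tendsto (fun n => g (θ n)) atTop (nhds 0) := by
    rw [tendsto_zero_iff_norm_tendsto_zero]
    have h1 : Tendsto (fun n => Real.sqrt (‖g (θ n)‖ ^ 2)) atTop (nhds 0) := by
      have h2 := (Real.continuous_sqrt.tendsto 0).comp hsq0
      simp only [Function.comp_def, Real.sqrt_zero] at h2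
      exact h2
    have h3 : (fun n => Real.sqrt (‖g (θ n)‖ ^ 2)) = fun n => ‖g (θ n)‖ := by
      funext n; rw [Real.sqrt_sq (norm_nonneg _)]
    rwa [h3] at h1
  obtain ⟨φ, hφ, hφt⟩ := hacc
  have h1 : Tendsto (g ∘ θ ∘ φ) atTop (nhds (g θstar)) := (hgc.tendsto θstar).comp hφt
  have h2 : Tendsto (g ∘ θ ∘ φ) atTop (nhds 0) := hn0.comp hφ.tendsto_atTop
  exact tendsto_nhds_unique h1 h2
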